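/- Let N ≥ 2 be an integer, l > 0, k₁,…,k_N ∈ (0,l), and let B be the N×N real matrix with B_{ii} = −l for all i, B_{i,i−1} = k_i for i = 2,…,N, B_{1,N} = k₁, and all other entries zero. Then for every γ > 0 the matrix M := γ cosh(γ) I − sinh(γ) B satisfies det(M) > 0; in particular M is invertible. -/

import Mathlib

/-- The cyclic coupling matrix of the directed-cycle topology. -/
def cycB (N : ℕ) [NeZero N] (l : ℝ) (k : Fin N → ℝ) : Matrix (Fin N) (Fin N) ℝ :=
  fun i j => if j = i then -l else if j = i - 1 then k i else 0

lemma stmt7_aux (N : ℕ) [NeZero N] (hN : 2 ≤ N) (l : ℝ) (hl : 0 < l)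
    (k : Fin N → ℝ) (hk : ∀ i, k i ∈ Set.Ioo 0 l) (γ : ℝ) (hγ : 0 < γ)
    (t : ℝ) (ht : 0 ≤ t) :
    Matrix.det ((γ * Real.cosh γ) • (1 : Matrix (Fin N) (Fin N) ℝ)
      - (t * Real.sinh γ) • cycB N l k) ≠ 0 := by
  have hs : 0 < Real.sinh γ := by simpa using Real.sinh_lt_sinh.mpr hγ
  have hc : 0 < γ * Real.cosh γ := mul_pos hγ ((Real.cosh_pos γ))
  apply det_ne_zero_of_sum_row_lt_diag
  intro i
  have hone : (1 : Fin N) ≠ 0 := by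
    intro h
    have := Fin.one_eq_zero_iff.mp h
    omega
  have hne : i - 1 ≠ i := by
    intro h
    exact hone (by simpa using sub_eq_self.mp h)
  obtain ⟨hk0, hkl⟩ := hk i
  have hdiag : ((γ * Real.cosh γ) • (1 : Matrix (Fin N) (Fin N) ℝ)
      - (t * Real.sinh γ) • cycB N l k) i i = γ * Real.cosh γ + t * Real.sinh γ * l := by
    simp [cycB, Matrix.one_apply]
  have hsum : ∑ j ∈ Finset.univ.erase i,
      ‖((γ * Real.cosh γ) • (1 : Matrix (Fin N) (Fin N) ℝ)
        - (t * Real.sinh γ) • cycB N l k) i j‖ = t * Real.sinh γ * k i := by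
    rw [Finset.sum_eq_single_of_mem (i - 1)
      (Finset.mem_erase.2 ⟨hne, Finset.mem_univ _⟩)]
    · have h1 : (1 : Matrix (Fin N) (Fin N) ℝ) i (i - 1) = 0 :=
        Matrix.one_apply_ne (fun h => hne h.symm)
      have h2 : cycB N l k i (i - 1) = k i := by simp [cycB, hne]
      simp only [Matrix.sub_apply, Matrix.smul_apply, h1, h2, smul_eq_mul, mul_zero, zero_sub,
        Real.norm_eq_abs, abs_neg, abs_mul]
      rw [abs_of_nonneg ht, abs_of_nonneg hs.le, abs_of_nonneg hk0.le]
    · intro j hj hjne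
      have hji : j ≠ i := (Finset.mem_erase.1 hj).1
      simp [cycB, Matrix.one_apply, hji, hjne, Ne.symm hji]
  rw [hsum, hdiag, Real.norm_eq_abs]
  rw [abs_of_nonneg (by positivity)]
  nlinarith [mul_nonneg ht hs.le]

/-- Positivity of `det(γ cosh(γ) I − sinh(γ) B)` and invertibility of this matrix,
for gains `kᵢ ∈ (0,l)`. -/
theorem stmt7 (N : ℕ) [NeZero N] (hN : 2 ≤ N) (l : ℝ) (hl : 0 < l)
    (k : Fin N → ℝ) (hk : ∀ i, k i ∈ Set.Ioo 0 l) (γ : ℝ) (hγ : 0 < γ) :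
    0 < Matrix.det
        ((γ * Real.cosh γ) • (1 : Matrix (Fin N) (Fin N) ℝ) - Real.sinh γ • cycB N l k) ∧
      IsUnit
        ((γ * Real.cosh γ) • (1 : Matrix (Fin N) (Fin N) ℝ) - Real.sinh γ • cycB N l k) := by
  set f : ℝ → ℝ := fun t => Matrix.det
      ((γ * Real.cosh γ) • (1 : Matrix (Fin N) (Fin N) ℝ) - (t * Real.sinh γ) • cycB N l k)
    with hf
  have hcont : Continuous f := by
    apply Continuous.matrix_det
    apply Continuous.sub continuous_const
    exact Continuous.smul (continuous_id.mul continuous_const) continuous_const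
  have hf0 : 0 < f 0 := by
    have : f 0 = (γ * Real.cosh γ) ^ N := by
      simp [hf, Matrix.det_smul]
    rw [this]
    exact pow_pos (mul_pos hγ (Real.cosh_pos γ)) N
  have hne : ∀ t ∈ Set.Icc (0:ℝ) 1, f t ≠ 0 := fun t ht =>
    stmt7_aux N hN l hl k hk γ hγ t ht.1
  have hf1 : 0 < f 1 := by
    rcases lt_trichotomy (f 1) 0 with h | h | h
    · exfalso
      have := intermediate_value_Icc' (by norm_num : (0:ℝ) ≤ 1) hcont.continuousOn
      have h0 : (0:ℝ) ∈ Set.Icc (f 1) (f 0) := ⟨h.le, hf0.le⟩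
      obtain ⟨t, ht, htv⟩ := this h0
      exact hne t ht htv
    · exact absurd h (hne 1 (by norm_num))
    · exact h
  have heq : ((γ * Real.cosh γ) • (1 : Matrix (Fin N) (Fin N) ℝ) - Real.sinh γ • cycB N l k)
      = (γ * Real.cosh γ) • (1 : Matrix (Fin N) (Fin N) ℝ) - ((1:ℝ) * Real.sinh γ) • cycB N l k := by
    rw [one_mul]
  rw [heq]
  refine ⟨hf1, ?_⟩
  rw [Matrix.isUnit_iff_isUnit_det]
  exact (hf1.ne').isUnit
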